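/- arXiv:1306.6223 — 4 statements merged into one kernel-verified Lean document; each statement's English description precedes it below -/
import Mathlib

section
/- Let t₀ > 0 and let λ̂ : (t₀,∞) → ℝ be a differentiable function satisfying ∂ₜλ̂(t) ≥ (3/t)(1 - e^{λ̂(t)/2}) for all t > t₀. Then for every ε > 0 there exists T > t₀ such that λ̂(t) ≥ -ε for all t ≥ T. -/
/-- ODE comparison: if `∂ₜ λ̂ ≥ (3/t)(1 - e^{λ̂/2})` on `(t₀,∞)`, then for every
`ε > 0` there is `T > t₀` with `λ̂(t) ≥ -ε` for all `t ≥ T`. -/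
theorem stmt1 (t₀ : ℝ) (ht₀ : 0 < t₀) (lam : ℝ → ℝ)
    (hdiff : ∀ t, t₀ < t → DifferentiableAt ℝ lam t)
    (hderiv : ∀ t, t₀ < t → (3 / t) * (1 - Real.exp (lam t / 2)) ≤ deriv lam t) :
    ∀ ε > 0, ∃ T > t₀, ∀ t, T ≤ t → -ε ≤ lam t := by
  intro ε hε
  set c : ℝ := 3 * (1 - Real.exp (-ε / 2)) with hc
  have hexp1 : Real.exp (-ε / 2) < 1 := Real.exp_lt_one_iff.mpr (by linarith)
  have hcpos : 0 < c := by rw [hc]; nlinarith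
  have key : ∀ t, t₀ < t → lam t ≤ -ε → c / t ≤ deriv lam t := by
    intro t ht hlt
    have h3 := hderiv t ht
    have htpos : 0 < t := lt_trans ht₀ ht
    have hee : Real.exp (lam t / 2) ≤ Real.exp (-ε / 2) :=
      Real.exp_le_exp.mpr (by linarith)
    have h1 : c / t = (3 / t) * (1 - Real.exp (-ε / 2)) := by
      rw [hc]; ring
    have h2 : (3 / t) * (1 - Real.exp (-ε / 2)) ≤ (3 / t) * (1 - Real.exp (lam t / 2)) :=
      mul_le_mul_of_nonneg_left (by linarith) (by positivity)
    linarith [h1 ▸ (le_trans h2 h3)]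
  -- Part 1: there exists t₁ > t₀ with lam t₁ ≥ -ε
  have exists_t1 : ∃ t₁, t₀ < t₁ ∧ -ε ≤ lam t₁ := by
    by_contra hno
    push_neg at hno
    set a : ℝ := t₀ + 1 with ha_def
    have ha : t₀ < a := by rw [ha_def]; linarith
    have hapos : 0 < a := lt_trans ht₀ ha
    set b : ℝ := a * Real.exp ((-ε - lam a) / c + 1) with hb_def
    have hlam_a : lam a < -ε := hno a ha
    have harg : (0:ℝ) < (-ε - lam a) / c + 1 := by
      have : 0 < (-ε - lam a) / c := div_pos (by linarith) hcpos
      linarith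
    have hab : a < b := by
      rw [hb_def]
      nth_rewrite 1 [← mul_one a]
      have h1e : (1:ℝ) < Real.exp ((-ε - lam a) / c + 1) := by
        have := Real.exp_lt_exp.mpr harg
        rwa [Real.exp_zero] at this
      exact mul_lt_mul_of_pos_left h1e hapos
    have hbpos : 0 < b := lt_trans hapos hab
    have hlogb : Real.log b = Real.log a + ((-ε - lam a) / c + 1) := by
      rw [hb_def, Real.log_mul (ne_of_gt hapos) (ne_of_gt (Real.exp_pos _)),
        Real.log_exp]
    -- g = lam - c * log is monotone on [a, b]
    set g : ℝ → ℝ := fun t => lam t - c * Real.log t with hg_def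
    have hmono : MonotoneOn g (Set.Icc a b) := by
      apply monotoneOn_of_deriv_nonneg (convex_Icc a b)
      · intro t ht
        have ht' : t₀ < t := lt_of_lt_of_le ha ht.1
        exact (((hdiff t ht').sub ((Real.differentiableAt_log
          (ne_of_gt (lt_trans ht₀ ht'))).const_mul c)).continuousAt).continuousWithinAt
      · intro t ht
        rw [interior_Icc] at ht
        have ht' : t₀ < t := lt_trans ha ht.1
        exact ((hdiff t ht').sub ((Real.differentiableAt_log
          (ne_of_gt (lt_trans ht₀ ht'))).const_mul c)).differentiableWithinAt
      · intro t ht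
        rw [interior_Icc] at ht
        have ht' : t₀ < t := lt_trans ha ht.1
        have htpos : 0 < t := lt_trans ht₀ ht'
        have hd : deriv g t = deriv lam t - c * t⁻¹ := by
          have h1 := (hdiff t ht').hasDerivAt
          have h2 := (Real.hasDerivAt_log (ne_of_gt htpos)).const_mul c
          have := (h1.sub h2).deriv
          simpa [hg_def, mul_comm, Pi.sub_def] using this
        have hkey := key t ht' (le_of_lt (hno t ht'))
        rw [hd]
        have : c / t = c * t⁻¹ := by ring
        linarith [this ▸ hkey]
    have hgab : g a ≤ g b := hmono (Set.left_mem_Icc.mpr (le_of_lt hab))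
      (Set.right_mem_Icc.mpr (le_of_lt hab)) (le_of_lt hab)
    have hlam_b : lam b < -ε := hno b (lt_trans ha hab)
    have : lam a - c * Real.log a ≤ lam b - c * Real.log b := hgab
    rw [hlogb] at this
    have hc' : c * ((-ε - lam a) / c) = -ε - lam a := by
      field_simp
    nlinarith [this, hc']
  -- Part 2: propagation
  obtain ⟨t₁, ht₁, hlam₁⟩ := exists_t1
  refine ⟨t₁, ht₁, fun s hs => ?_⟩
  by_contra hcon
  push_neg at hcon
  have hst : t₁ < s := by
    rcases eq_or_lt_of_le hs with h | h
    · exfalso; rw [← h] at hcon; linarith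
    · exact h
  have hcontIcc : ContinuousOn lam (Set.Icc t₁ s) := fun t ht =>
    ((hdiff t (lt_of_lt_of_le ht₁ ht.1)).continuousAt).continuousWithinAt
  set S : Set ℝ := Set.Icc t₁ s ∩ lam ⁻¹' Set.Ici (-ε) with hS_def
  have hSclosed : IsClosed S :=
    hcontIcc.preimage_isClosed_of_isClosed isClosed_Icc isClosed_Ici
  have hSne : S.Nonempty := ⟨t₁, Set.left_mem_Icc.mpr (le_of_lt hst), hlam₁⟩
  have hSbdd : BddAbove S := BddAbove.mono Set.inter_subset_left isCompact_Icc.bddAbove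
  set u : ℝ := sSup S with hu_def
  have huS : u ∈ S := hSclosed.csSup_mem hSne hSbdd
  obtain ⟨⟨hut₁, hus⟩, hulam⟩ := huS
  have hulam' : -ε ≤ lam u := hulam
  have hune : u ≠ s := by
    intro h; rw [h] at hulam'; linarith
  have huls : u < s := lt_of_le_of_ne hus hune
  have hbelow : ∀ r, u < r → r ≤ s → lam r < -ε := by
    intro r hur hrs
    by_contra hge
    push_neg at hge
    have hrS : r ∈ S := ⟨⟨le_trans hut₁ (le_of_lt hur), hrs⟩, hge⟩
    exact absurd (le_csSup hSbdd hrS) (not_le.mpr hur)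
  have hut₀ : t₀ < u := lt_of_lt_of_le ht₁ hut₁
  have hmono : MonotoneOn lam (Set.Icc u s) := by
    apply monotoneOn_of_deriv_nonneg (convex_Icc u s)
    · exact hcontIcc.mono (Set.Icc_subset_Icc_left hut₁)
    · intro t ht
      rw [interior_Icc] at ht
      exact (hdiff t (lt_trans hut₀ ht.1)).differentiableWithinAt
    · intro t ht
      rw [interior_Icc] at ht
      have ht' : t₀ < t := lt_trans hut₀ ht.1
      have hkey := key t ht' (le_of_lt (hbelow t ht.1 (le_of_lt ht.2)))
      have : 0 < c / t := div_pos hcpos (lt_trans ht₀ ht')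
      linarith
  have := hmono (Set.left_mem_Icc.mpr (le_of_lt huls))
    (Set.right_mem_Icc.mpr (le_of_lt huls)) (le_of_lt huls)
  linarith
end

section
/- Consider on [t₁, t] (with t₁ ≥ 2) the linear system dΨ̂/ds = (2/(s ln s)) Ψ̂ + a(s) Ψ̂ + b(s) Ẑ, dẐ/ds = c(s) Ψ̂ + d(s) Ẑ, where |a(s)| ≤ C s^{-2}, |b(s)| ≤ C s^{-2}(ln s)², |c(s)| ≤ C s^{-1}(ln s)^{-2}, |d(s)| ≤ C s^{-3/2}. Then there is a constant C' depending only on C and t₁ (not on t) such that Ψ̂(s)² + Ẑ(s)² ≤ C' (Ψ̂(t)² + Ẑ(t)²) for all s ∈ [t₁, t]. -/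
private lemma log_sq_le (s : ℝ) (hs : 2 ≤ s) : (Real.log s)^2 ≤ 16 * Real.sqrt s := by
  have h0 : (0:ℝ) < s := by linarith
  have h1 : (1:ℝ) ≤ Real.sqrt s := by
    rw [show (1:ℝ) = Real.sqrt 1 by simp]
    exact Real.sqrt_le_sqrt (by linarith)
  have h2 : (1:ℝ) ≤ Real.sqrt (Real.sqrt s) := by
    rw [show (1:ℝ) = Real.sqrt 1 by simp]
    exact Real.sqrt_le_sqrt h1
  have hlog : Real.log s = 4 * Real.log (Real.sqrt (Real.sqrt s)) := by
    rw [Real.log_sqrt (Real.sqrt_nonneg s), Real.log_sqrt h0.le]; ring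
  have h3 : Real.log (Real.sqrt (Real.sqrt s)) ≤ Real.sqrt (Real.sqrt s) := by
    have := Real.log_le_sub_one_of_pos (x := Real.sqrt (Real.sqrt s)) (by linarith)
    linarith
  have h4 : 0 ≤ Real.log (Real.sqrt (Real.sqrt s)) := Real.log_nonneg h2
  have h5 : (Real.sqrt (Real.sqrt s))^2 = Real.sqrt s := Real.sq_sqrt (Real.sqrt_nonneg s)
  have h6 : (Real.log (Real.sqrt (Real.sqrt s)))^2 ≤ (Real.sqrt (Real.sqrt s))^2 :=
    pow_le_pow_left₀ h4 h3 2
  rw [hlog]; nlinarith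

private lemma rpow_neg_two_eq (s : ℝ) (hs : 2 ≤ s) : s ^ (-(2:ℝ)) = (s^2)⁻¹ := by
  have h0 : (0:ℝ) < s := by linarith
  rw [Real.rpow_neg h0.le, show (2:ℝ) = ((2:ℕ):ℝ) by norm_num, Real.rpow_natCast]

private lemma rpow_neg_three_half_eq (s : ℝ) (hs : 2 ≤ s) :
    s ^ (-(3:ℝ)/2) = (s * Real.sqrt s)⁻¹ := by
  have h0 : (0:ℝ) < s := by linarith
  rw [show (-(3:ℝ)/2) = -(3/2) by norm_num, Real.rpow_neg h0.le]
  congr 1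
  rw [show ((3:ℝ)/2) = 1 + 1/2 by norm_num, Real.rpow_add h0, Real.rpow_one,
    ← Real.sqrt_eq_rpow]

private lemma hasDerivAt_G (C : ℝ) (x : ℝ) (hx : 2 ≤ x) :
    HasDerivAt (fun y => -(20*C) * (2 / Real.sqrt y + 1 / Real.log y))
      (20*C*((x*Real.sqrt x)⁻¹ + (x*(Real.log x)^2)⁻¹)) x := by
  have h0 : (0:ℝ) < x := by linarith
  have hsq : (0:ℝ) < Real.sqrt x := Real.sqrt_pos.mpr h0
  have hL : (0:ℝ) < Real.log x := Real.log_pos (by linarith)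
  have h1 : HasDerivAt Real.sqrt (1/(2*Real.sqrt x)) x := Real.hasDerivAt_sqrt h0.ne'
  have h2 : HasDerivAt (fun y => 2 / Real.sqrt y)
      ((0 * Real.sqrt x - 2 * (1/(2*Real.sqrt x))) / (Real.sqrt x)^2) x :=
    (hasDerivAt_const x 2).div h1 hsq.ne'
  have h3 : HasDerivAt Real.log x⁻¹ x := Real.hasDerivAt_log h0.ne'
  have h4 : HasDerivAt (fun y => 1 / Real.log y)
      ((0 * Real.log x - 1 * x⁻¹) / (Real.log x)^2) x :=
    (hasDerivAt_const x 1).div h3 hL.ne'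
  have h5 := ((h2.add h4).const_mul (-(20*C)))
  refine h5.congr_deriv ?_
  rw [Real.sq_sqrt h0.le]
  field_simp
  ring_nf

private lemma key_ineq (C u v s L P Q A B Cc D : ℝ) (hC : 0 < C) (hu : 0 < u) (hv : 0 < v)
    (hs : 0 < s) (hL : 0 < L) (hA : |A| ≤ C*u) (hB : |B| ≤ 16*C*u)
    (hCc : |Cc| ≤ C*v) (hD : |D| ≤ C*u) :
    0 ≤ (2*P*((2/(s*L))*P + A*P + B*Q) + 2*Q*(Cc*P + D*Q)) + 20*C*(u+v)*(P^2+Q^2) := by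
  have hPQ : 2 * |P * Q| ≤ P^2+Q^2 := by
    rw [abs_mul]
    nlinarith [sq_abs P, sq_abs Q, sq_nonneg (|P| - |Q|)]
  have hBQ : -((16*C*u)*(P^2+Q^2)) ≤ 2*(B*(P*Q)) := by
    have h1 : |2*(B*(P*Q))| ≤ (16*C*u)*(P^2+Q^2) := by
      rw [abs_mul, abs_mul, abs_two]
      calc 2 * (|B| * |P * Q|) = |B| * (2 * |P * Q|) := by ring
      _ ≤ (16*C*u) * (P^2+Q^2) := mul_le_mul hB hPQ (by positivity) (by positivity)
    linarith [neg_abs_le (2*(B*(P*Q)))]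
  have hCQ : -((C*v)*(P^2+Q^2)) ≤ 2*(Cc*(P*Q)) := by
    have h1 : |2*(Cc*(P*Q))| ≤ (C*v)*(P^2+Q^2) := by
      rw [abs_mul, abs_mul, abs_two]
      calc 2 * (|Cc| * |P * Q|) = |Cc| * (2 * |P * Q|) := by ring
      _ ≤ (C*v) * (P^2+Q^2) := mul_le_mul hCc hPQ (by positivity) (by positivity)
    linarith [neg_abs_le (2*(Cc*(P*Q)))]
  have hA1 : -(C*u)*P^2 ≤ A*P^2 :=
    mul_le_mul_of_nonneg_right (neg_le_of_abs_le hA) (sq_nonneg P)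
  have hD1 : -(C*u)*Q^2 ≤ D*Q^2 :=
    mul_le_mul_of_nonneg_right (neg_le_of_abs_le hD) (sq_nonneg Q)
  have hpos : 0 ≤ 4/(s*L)*P^2 := by positivity
  have e : (2*P*((2/(s*L))*P + A*P + B*Q) + 2*Q*(Cc*P + D*Q)) + 20*C*(u+v)*(P^2+Q^2)
      = 4/(s*L)*P^2 + 2*(A*P^2) + 2*(B*(P*Q)) + 2*(Cc*(P*Q)) + 2*(D*Q^2)
        + 20*(C*u*P^2) + 20*(C*u*Q^2) + 20*(C*v*P^2) + 20*(C*v*Q^2) := by ring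
  rw [e]
  have n1 : 0 ≤ C*u*P^2 := by positivity
  have n2 : 0 ≤ C*u*Q^2 := by positivity
  have n3 : 0 ≤ C*v*P^2 := by positivity
  have n4 : 0 ≤ C*v*Q^2 := by positivity
  nlinarith [hBQ, hCQ, hA1, hD1]

/-- Energy estimate for the rescaled Jacobi system: solutions of
`Ψ̂' = (2/(s ln s)) Ψ̂ + a Ψ̂ + b Ẑ`, `Ẑ' = c Ψ̂ + d Ẑ` with
`|a| ≤ C s⁻², |b| ≤ C s⁻² (ln s)², |c| ≤ C s⁻¹ (ln s)⁻², |d| ≤ C s^{-3/2}`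
satisfy `Ψ̂(s)² + Ẑ(s)² ≤ C' (Ψ̂(t)² + Ẑ(t)²)` with `C'` independent of `t`. -/
theorem stmt10 (t₁ C : ℝ) (ht₁ : 2 ≤ t₁) (hC : 0 < C) :
    ∃ C' > 0, ∀ t, t₁ ≤ t → ∀ Ψ Z a b c d : ℝ → ℝ,
      (∀ s ∈ Set.Icc t₁ t, |a s| ≤ C * s ^ (-(2 : ℝ))) →
      (∀ s ∈ Set.Icc t₁ t, |b s| ≤ C * s ^ (-(2 : ℝ)) * Real.log s ^ 2) →
      (∀ s ∈ Set.Icc t₁ t, |c s| ≤ C * s⁻¹ * (Real.log s ^ 2)⁻¹) →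
      (∀ s ∈ Set.Icc t₁ t, |d s| ≤ C * s ^ (-(3 : ℝ) / 2)) →
      (∀ s ∈ Set.Icc t₁ t,
        HasDerivAt Ψ ((2 / (s * Real.log s)) * Ψ s + a s * Ψ s + b s * Z s) s) →
      (∀ s ∈ Set.Icc t₁ t, HasDerivAt Z (c s * Ψ s + d s * Z s) s) →
      ∀ s ∈ Set.Icc t₁ t, Ψ s ^ 2 + Z s ^ 2 ≤ C' * (Ψ t ^ 2 + Z t ^ 2) := by
  refine ⟨Real.exp (80*C), Real.exp_pos _, ?_⟩
  intro t ht Ψ Z a b c d ha hb hc hd hΨ hZ s hs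
  set G : ℝ → ℝ := fun y => -(20*C) * (2 / Real.sqrt y + 1 / Real.log y) with hGdef
  set F : ℝ → ℝ := fun y => (Ψ y^2 + Z y^2) * Real.exp (G y) with hFdef
  -- derivative of F on Icc
  have hFder : ∀ x ∈ Set.Icc t₁ t, HasDerivAt F
      ((2*Ψ x*((2 / (x * Real.log x)) * Ψ x + a x * Ψ x + b x * Z x)
          + 2*Z x*(c x * Ψ x + d x * Z x)) * Real.exp (G x)
        + (Ψ x^2 + Z x^2) *
          (Real.exp (G x) * (20*C*((x*Real.sqrt x)⁻¹ + (x*(Real.log x)^2)⁻¹)))) x := by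
    intro x hx
    have hx2 : (2:ℝ) ≤ x := le_trans ht₁ hx.1
    have hE : HasDerivAt (fun y => Ψ y^2 + Z y^2)
        (2*Ψ x*((2 / (x * Real.log x)) * Ψ x + a x * Ψ x + b x * Z x)
          + 2*Z x*(c x * Ψ x + d x * Z x)) x := by
      have := ((hΨ x hx).pow 2).add ((hZ x hx).pow 2)
      refine this.congr_deriv ?_
      push_cast
      ring
    have hexp : HasDerivAt (fun y => Real.exp (G y))
        (Real.exp (G x) * (20*C*((x*Real.sqrt x)⁻¹ + (x*(Real.log x)^2)⁻¹))) x :=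
      (hasDerivAt_G C x hx2).exp
    exact hE.mul hexp
  -- monotonicity of F
  have hmono : MonotoneOn F (Set.Icc t₁ t) := by
    apply monotoneOn_of_deriv_nonneg (convex_Icc t₁ t)
    · exact fun x hx => (hFder x hx).continuousAt.continuousWithinAt
    · exact fun x hx => ((hFder x (interior_subset hx)).differentiableAt).differentiableWithinAt
    · intro x hx
      have hx' : x ∈ Set.Icc t₁ t := interior_subset hx
      rw [(hFder x hx').deriv]
      have hx2 : (2:ℝ) ≤ x := le_trans ht₁ hx'.1
      have h0 : (0:ℝ) < x := by linarith
      have hsq : (0:ℝ) < Real.sqrt x := Real.sqrt_pos.mpr h0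
      have hL : (0:ℝ) < Real.log x := Real.log_pos (by linarith)
      have hx1 : (1:ℝ) ≤ x := by linarith
      set u : ℝ := (x*Real.sqrt x)⁻¹ with hudef
      set v : ℝ := (x*(Real.log x)^2)⁻¹ with hvdef
      have hu : 0 < u := by positivity
      have hv : 0 < v := by positivity
      -- coefficient bounds
      have hx2inv : (x^2)⁻¹ ≤ u := by
        rw [hudef]
        apply inv_anti₀ (by positivity)
        have : Real.sqrt x ≤ x := by
          calc Real.sqrt x ≤ Real.sqrt (x^2) := Real.sqrt_le_sqrt (by nlinarith)
          _ = x := Real.sqrt_sq h0.le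
        nlinarith
      have hA : |a x| ≤ C*u := by
        have := ha x hx'
        rw [rpow_neg_two_eq x hx2] at this
        calc |a x| ≤ C * (x^2)⁻¹ := this
        _ ≤ C*u := by nlinarith
      have hB : |b x| ≤ 16*C*u := by
        have h1 := hb x hx'
        rw [rpow_neg_two_eq x hx2] at h1
        have h2 : (Real.log x)^2 ≤ 16 * Real.sqrt x := log_sq_le x hx2
        have h3 : Real.sqrt x * (x^2)⁻¹ = u := by
          rw [hudef]
          have hss : Real.sqrt x * Real.sqrt x = x := Real.mul_self_sqrt h0.le
          field_simp
          nlinarith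
        calc |b x| ≤ C * (x^2)⁻¹ * (Real.log x)^2 := h1
        _ ≤ C * (x^2)⁻¹ * (16 * Real.sqrt x) := by
            apply mul_le_mul_of_nonneg_left h2 (by positivity)
        _ = 16*C*(Real.sqrt x * (x^2)⁻¹) := by ring
        _ = 16*C*u := by rw [h3]
      have hCc : |c x| ≤ C*v := by
        have := hc x hx'
        calc |c x| ≤ C * x⁻¹ * ((Real.log x)^2)⁻¹ := this
        _ = C*v := by rw [hvdef, mul_inv]; ring
      have hD : |d x| ≤ C*u := by
        have := hd x hx'
        rwa [rpow_neg_three_half_eq x hx2, ← hudef] at this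
      have key : 0 ≤ (2*Ψ x*((2 / (x * Real.log x)) * Ψ x + a x * Ψ x + b x * Z x)
          + 2*Z x*(c x * Ψ x + d x * Z x)) + 20*C*(u+v)*(Ψ x^2 + Z x^2) :=
        key_ineq C u v x (Real.log x) (Ψ x) (Z x) (a x) (b x) (c x) (d x)
          hC hu hv h0 hL hA hB hCc hD
      have e : (2*Ψ x*((2 / (x * Real.log x)) * Ψ x + a x * Ψ x + b x * Z x)
          + 2*Z x*(c x * Ψ x + d x * Z x)) * Real.exp (G x)
        + (Ψ x^2 + Z x^2) * (Real.exp (G x) * (20*C*(u + v)))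
        = ((2*Ψ x*((2 / (x * Real.log x)) * Ψ x + a x * Ψ x + b x * Z x)
          + 2*Z x*(c x * Ψ x + d x * Z x)) + 20*C*(u+v)*(Ψ x^2 + Z x^2)) * Real.exp (G x) := by
        ring
      rw [e]
      exact mul_nonneg key (Real.exp_pos _).le
  -- bounds on G
  have hGbound : ∀ x, 2 ≤ x → -(80*C) ≤ G x ∧ G x ≤ 0 := by
    intro x hx2
    have h0 : (0:ℝ) < x := by linarith
    have hsq1 : (1:ℝ) ≤ Real.sqrt x := by
      rw [show (1:ℝ) = Real.sqrt 1 by simp]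
      exact Real.sqrt_le_sqrt (by linarith)
    have hL : (1:ℝ)/2 ≤ Real.log x := by
      have h1 : Real.log 2 ≤ Real.log x := Real.log_le_log (by norm_num) hx2
      have h2 := Real.log_two_gt_d9
      linarith
    have hLpos : (0:ℝ) < Real.log x := by linarith
    have h1 : 2 / Real.sqrt x ≤ 2 := by
      rw [div_le_iff₀ (by linarith)]
      linarith
    have h2 : 1 / Real.log x ≤ 2 := by
      rw [div_le_iff₀ hLpos]
      linarith
    have h3 : 0 ≤ 2 / Real.sqrt x + 1 / Real.log x := by positivity
    constructor
    · show -(80*C) ≤ -(20*C) * (2 / Real.sqrt x + 1 / Real.log x)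
      nlinarith
    · show -(20*C) * (2 / Real.sqrt x + 1 / Real.log x) ≤ 0
      nlinarith
  have hs2 : (2:ℝ) ≤ s := le_trans ht₁ hs.1
  have ht2 : (2:ℝ) ≤ t := le_trans ht₁ ht
  have hFst : F s ≤ F t := hmono hs ⟨ht, le_refl t⟩ hs.2
  have hGs := (hGbound s hs2).1
  have hGt := (hGbound t ht2).2
  have hEs : 0 ≤ Ψ s^2 + Z s^2 := by positivity
  have hEt : 0 ≤ Ψ t^2 + Z t^2 := by positivity
  have h1 : (Ψ s^2 + Z s^2) * Real.exp (-(80*C)) ≤ Ψ t^2 + Z t^2 := by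
    have hexpt : Real.exp (G t) ≤ 1 := by
      have := Real.exp_le_exp.mpr hGt
      rwa [Real.exp_zero] at this
    calc (Ψ s^2 + Z s^2) * Real.exp (-(80*C))
        ≤ (Ψ s^2 + Z s^2) * Real.exp (G s) :=
          mul_le_mul_of_nonneg_left (Real.exp_le_exp.mpr hGs) hEs
      _ ≤ (Ψ t^2 + Z t^2) * Real.exp (G t) := hFst
      _ ≤ (Ψ t^2 + Z t^2) * 1 := mul_le_mul_of_nonneg_left hexpt hEt
      _ = Ψ t^2 + Z t^2 := mul_one _
  have h2 := mul_le_mul_of_nonneg_right h1 (Real.exp_pos (80*C)).le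
  have e2 : (Ψ s^2 + Z s^2) * Real.exp (-(80*C)) * Real.exp (80*C) = Ψ s^2 + Z s^2 := by
    rw [mul_assoc, ← Real.exp_add]
    norm_num
  rw [e2] at h2
  linarith [h2]
end

section
/- Let t₁ ≥ 2 and suppose ḡ : [t₁,∞) × T³ → (symmetric positive definite 3×3 matrices) is a family of Riemannian metrics on the 3-torus whose components with respect to fixed coordinates satisfy |ḡ_{ij}(t,x̄) t^{-1} - ḡ_{∞,ij}(x̄)| ≤ C t^{-1} for a fixed Riemannian metric ḡ_∞. Let γ̄ : [t₁,∞) → T³ be a curve with ḡ_{ij}(t,γ̄(t)) γ̄'ⁱ(t) γ̄'ʲ(t) ≤ K² t^{-2} for all t ≥ t₁ and some K > 0. Then γ̄(t) converges to a point x̄₀ ∈ T³ as t → ∞, and d_∞(γ̄(t), x̄₀) ≤ C' t^{-1/2} for all t ≥ t₁, where d_∞ is the distance function of ḡ_∞ and C' depends only on C, K, ḡ_∞. -/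
set_option maxHeartbeats 1000000

open Filter Real Set

/-- Asymptotic silence: if the family of metrics `ḡ(t,·)` satisfies
`|t⁻¹ ḡ_{ij} - ḡ_{∞,ij}| ≤ C t⁻¹` for a uniformly elliptic limit metric `ḡ_∞`
(whose distance function `d_∞` is dominated by the coordinate distance), and the
curve `γ̄` satisfies `ḡ_{ij} γ̄'ⁱ γ̄'ʲ ≤ K² t⁻²`, then `γ̄(t)` converges to a
point `x̄₀` with `d_∞(γ̄(t), x̄₀) ≤ C' t^{-1/2}`. -/
theorem stmt15 (t₁ C K m M : ℝ) (ht₁ : 2 ≤ t₁) (hC : 0 < C) (hK : 0 < K)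
    (hm : 0 < m) (hM : 0 < M)
    (g : ℝ → EuclideanSpace ℝ (Fin 3) → Matrix (Fin 3) (Fin 3) ℝ)
    (ginf : EuclideanSpace ℝ (Fin 3) → Matrix (Fin 3) (Fin 3) ℝ)
    (dinf : EuclideanSpace ℝ (Fin 3) → EuclideanSpace ℝ (Fin 3) → ℝ)
    (γ : ℝ → EuclideanSpace ℝ (Fin 3))
    (hdiff : ∀ t, t₁ ≤ t → DifferentiableAt ℝ γ t)
    (hcomp : ∀ t, t₁ ≤ t → ∀ x, ∀ i j, |g t x i j * t⁻¹ - ginf x i j| ≤ C * t⁻¹)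
    (hell : ∀ x (v : EuclideanSpace ℝ (Fin 3)),
      m * ‖v‖ ^ 2 ≤ ∑ i, ∑ j, ginf x i j * v i * v j)
    (hdmetric : ∀ x y, dinf x y ≤ M * ‖x - y‖)
    (hspeed : ∀ t, t₁ ≤ t →
      ∑ i, ∑ j, g t (γ t) i j * deriv γ t i * deriv γ t j ≤ K ^ 2 * t ^ (-(2 : ℝ))) :
    ∃ x₀, Filter.Tendsto γ Filter.atTop (nhds x₀) ∧
      ∃ C' > 0, ∀ t, t₁ ≤ t → dinf (γ t) x₀ ≤ C' * t ^ (-(1 : ℝ) / 2) := by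
  have ht₁0 : (0:ℝ) < t₁ := lt_of_lt_of_le two_pos ht₁
  set T₀ : ℝ := max t₁ (6*C/m) with hT₀def
  have hT₀t₁ : t₁ ≤ T₀ := le_max_left _ _
  have hT₀0 : 0 < T₀ := lt_of_lt_of_le ht₁0 hT₀t₁
  set A : ℝ := Real.sqrt (2*K^2/m) with hAdef
  have hA0 : 0 < A := Real.sqrt_pos.2 (by positivity)
  -- Step 1: derivative bound ‖γ'(t)‖ ≤ A t^{-3/2} for t ≥ T₀
  have hderiv : ∀ t, T₀ ≤ t → ‖deriv γ t‖ ≤ A * t ^ (-(3:ℝ)/2) := by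
    intro t ht
    have ht1 : t₁ ≤ t := hT₀t₁.trans ht
    have ht0 : 0 < t := lt_of_lt_of_le hT₀0 ht
    set v := deriv γ t with hv
    have hnorm : ‖v‖^2 = ∑ i, v i ^ 2 := by
      rw [EuclideanSpace.norm_eq, Real.sq_sqrt (by positivity)]
      simp [Real.norm_eq_abs, sq_abs]
    have key : ∀ i j, ginf (γ t) i j * v i * v j
        ≤ g t (γ t) i j * t⁻¹ * v i * v j + C * t⁻¹ * (|v i| * |v j|) := by
      intro i j
      have h := hcomp t ht1 (γ t) i j
      have h2 : (ginf (γ t) i j - g t (γ t) i j * t⁻¹) * (v i * v j)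
          ≤ C * t⁻¹ * (|v i| * |v j|) := by
        calc (ginf (γ t) i j - g t (γ t) i j * t⁻¹) * (v i * v j)
            ≤ |(ginf (γ t) i j - g t (γ t) i j * t⁻¹) * (v i * v j)| := le_abs_self _
          _ = |g t (γ t) i j * t⁻¹ - ginf (γ t) i j| * (|v i| * |v j|) := by
              rw [abs_mul, abs_sub_comm, abs_mul]
          _ ≤ C * t⁻¹ * (|v i| * |v j|) :=
              mul_le_mul_of_nonneg_right h (by positivity)
      linarith [h2]
    have habs : (∑ i, |v i|)^2 ≤ 3 * ‖v‖^2 := by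
      have := sq_sum_le_card_mul_sum_sq (s := (Finset.univ : Finset (Fin 3)))
        (f := fun i => |v i|)
      simp only [Finset.card_univ, Fintype.card_fin, sq_abs] at this
      calc (∑ i, |v i|)^2 ≤ 3 * ∑ i, v i ^ 2 := by exact_mod_cast this
        _ = 3 * ‖v‖^2 := by rw [hnorm]
    have hsum : ∑ i, ∑ j, ginf (γ t) i j * v i * v j
        ≤ t⁻¹ * (K^2 * t ^ (-(2:ℝ))) + C * t⁻¹ * (3 * ‖v‖^2) := by
      calc ∑ i, ∑ j, ginf (γ t) i j * v i * v j
          ≤ ∑ i, ∑ j, (g t (γ t) i j * t⁻¹ * v i * v j + C * t⁻¹ * (|v i| * |v j|)) :=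
            Finset.sum_le_sum fun i _ => Finset.sum_le_sum fun j _ => key i j
        _ = t⁻¹ * (∑ i, ∑ j, g t (γ t) i j * v i * v j) + C * t⁻¹ * (∑ i, |v i|)^2 := by
            simp only [Fin.sum_univ_three]; ring
        _ ≤ t⁻¹ * (K^2 * t ^ (-(2:ℝ))) + C * t⁻¹ * (3 * ‖v‖^2) := by
            refine add_le_add (mul_le_mul_of_nonneg_left (hspeed t ht1) (by positivity))
              (mul_le_mul_of_nonneg_left habs (by positivity))
    have hmain : m * ‖v‖^2 ≤ t⁻¹ * (K^2 * t ^ (-(2:ℝ))) + C * t⁻¹ * (3 * ‖v‖^2) :=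
      (hell (γ t) v).trans hsum
    have h6 : 6*C/m ≤ t := (le_max_right _ _).trans ht
    have htinv : t * t⁻¹ = 1 := mul_inv_cancel₀ ht0.ne'
    have hhalf : 3*C*t⁻¹ ≤ m/2 := by
      rw [div_le_iff₀ hm] at h6
      have ht0' : (0:ℝ) < t⁻¹ := inv_pos.2 ht0
      nlinarith
    have ht3 : t⁻¹ * t ^ (-(2:ℝ)) = t ^ (-(3:ℝ)) := by
      rw [← Real.rpow_neg_one t, ← Real.rpow_add ht0]; norm_num
    have e1 : t⁻¹ * (K^2 * t ^ (-(2:ℝ))) = K^2 * t ^ (-(3:ℝ)) := by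
      rw [← ht3]; ring
    have h5 : 3*C*t⁻¹*‖v‖^2 ≤ (m/2)*‖v‖^2 :=
      mul_le_mul_of_nonneg_right hhalf (sq_nonneg _)
    have hmain' : m * ‖v‖^2 ≤ K^2 * t ^ (-(3:ℝ)) + (m/2)*‖v‖^2 := by
      rw [e1] at hmain; linarith [hmain, h5]
    have hsq : ‖v‖^2 ≤ 2*K^2/m * t ^ (-(3:ℝ)) := by
      rw [div_mul_eq_mul_div, le_div_iff₀ hm]; linarith [hmain']
    have hfin : ‖v‖ ≤ A * t ^ (-(3:ℝ)/2) := by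
      rw [← Real.sqrt_sq (norm_nonneg v)]
      refine (Real.sqrt_le_sqrt hsq).trans_eq ?_
      rw [Real.sqrt_mul (by positivity), hAdef]
      congr 1
      rw [Real.sqrt_eq_rpow, ← Real.rpow_mul ht0.le]
      norm_num
    exact hfin
  -- Step 2: distance estimate via mean value inequality
  have hdist : ∀ s u, T₀ ≤ s → s ≤ u → ‖γ u - γ s‖ ≤ 2*A* s ^ (-(1:ℝ)/2) := by
    intro s u hs hsu
    have hs0 : 0 < s := hT₀0.trans_le hs
    have hfB : ∀ x ∈ Set.Icc s u, ‖γ x - γ s‖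
        ≤ 2*A*(s ^ (-(1:ℝ)/2) - x ^ (-(1:ℝ)/2)) := by
      intro x hx
      refine image_norm_le_of_norm_deriv_right_le_deriv_boundary'
        (f := fun r => γ r - γ s) (f' := deriv γ)
        (B := fun r => 2*A*(s ^ (-(1:ℝ)/2) - r ^ (-(1:ℝ)/2)))
        (B' := fun r => A * r ^ (-(3:ℝ)/2)) ?_ ?_ ?_ ?_ ?_ ?_ hx
      · intro r hr
        exact (((hdiff r ((hT₀t₁.trans hs).trans hr.1)).continuousAt).continuousWithinAt).sub
          continuousWithinAt_const
      · intro r hr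
        exact ((hdiff r ((hT₀t₁.trans hs).trans hr.1)).hasDerivAt.sub_const
          (γ s)).hasDerivWithinAt
      · simp
      · intro r hr
        have hr0 : r ≠ 0 := (hs0.trans_le hr.1).ne'
        exact (continuousWithinAt_const.sub
          ((Real.continuousAt_rpow_const r _ (Or.inl hr0)).continuousWithinAt)).const_mul _
      · intro r hr
        have hr0 : (0:ℝ) < r := hs0.trans_le hr.1
        have hd : HasDerivAt (fun x : ℝ => x ^ (-(1:ℝ)/2))
            ((-(1:ℝ)/2) * r ^ (-(1:ℝ)/2 - 1)) r :=
          Real.hasDerivAt_rpow_const (Or.inl hr0.ne')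
        have hd2 : HasDerivAt (fun x : ℝ => 2*A*(s ^ (-(1:ℝ)/2) - x ^ (-(1:ℝ)/2)))
            (2*A*(0 - (-(1:ℝ)/2) * r ^ (-(1:ℝ)/2 - 1))) r :=
          ((hasDerivAt_const r (s ^ (-(1:ℝ)/2))).sub hd).const_mul (2*A)
        have he : 2*A*(0 - (-(1:ℝ)/2) * r ^ (-(1:ℝ)/2 - 1)) = A * r ^ (-(3:ℝ)/2) := by
          rw [show (-(1:ℝ)/2 - 1) = -(3:ℝ)/2 by norm_num]; ring
        rw [he] at hd2
        exact hd2.hasDerivWithinAt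
      · intro r hr
        exact hderiv r (hs.trans hr.1)
    have h1 := hfB u ⟨hsu, le_rfl⟩
    have h2 : (0:ℝ) ≤ u ^ (-(1:ℝ)/2) := Real.rpow_nonneg (hs0.le.trans hsu) _
    have h3 : 0 ≤ 2*A*u ^ (-(1:ℝ)/2) := by positivity
    linarith [h1]
  -- Step 3: the limit point
  have hb0 : Tendsto (fun N : ℕ => 2*A*(T₀ + N) ^ (-(1:ℝ)/2)) atTop (nhds 0) := by
    have h1 : Tendsto (fun N : ℕ => (T₀ + N : ℝ)) atTop atTop :=
      tendsto_atTop_add_const_left _ _ tendsto_natCast_atTop_atTop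
    have h2 : Tendsto (fun x : ℝ => x ^ (-(1:ℝ)/2)) atTop (nhds 0) := by
      rw [show (-(1:ℝ)/2) = -(1/2 : ℝ) by norm_num]
      exact tendsto_rpow_neg_atTop (by norm_num)
    have := (h2.comp h1).const_mul (2*A)
    simpa using this
  have hmono : ∀ x y : ℝ, 0 < x → x ≤ y → y ^ (-(1:ℝ)/2) ≤ x ^ (-(1:ℝ)/2) :=
    fun x y hx hxy => Real.rpow_le_rpow_of_nonpos hx hxy (by norm_num)
  have hcauchy : CauchySeq (fun n : ℕ => γ (T₀ + n)) := by
    refine cauchySeq_of_le_tendsto_0 (fun N => 2*A*(T₀ + N) ^ (-(1:ℝ)/2)) ?_ hb0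
    intro n mm N hn hm
    have key : ∀ a b : ℕ, N ≤ a → a ≤ b →
        dist (γ (T₀ + a)) (γ (T₀ + b)) ≤ 2*A*(T₀ + N) ^ (-(1:ℝ)/2) := by
      intro a b hNa hab
      have h1 : T₀ ≤ T₀ + a := le_add_of_nonneg_right (Nat.cast_nonneg a)
      have h2 : (T₀ + a : ℝ) ≤ T₀ + b := by
        have : (a:ℝ) ≤ b := Nat.cast_le.2 hab
        linarith
      have h3 := hdist (T₀ + a) (T₀ + b) h1 h2
      rw [dist_eq_norm, norm_sub_rev]
      refine h3.trans ?_
      have h4 : (T₀ + a : ℝ) ^ (-(1:ℝ)/2) ≤ (T₀ + N : ℝ) ^ (-(1:ℝ)/2) :=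
        hmono _ _ (by positivity) (by have : (N:ℝ) ≤ a := Nat.cast_le.2 hNa; linarith)
      exact mul_le_mul_of_nonneg_left h4 (by positivity)
    rcases le_total n mm with h | h
    · exact key n mm hn h
    · rw [dist_comm]; exact key mm n hm h
  obtain ⟨x₀, hlim⟩ := cauchySeq_tendsto_of_complete hcauchy
  -- Step 4: the bound ‖γ t - x₀‖ ≤ 2A t^{-1/2} for t ≥ T₀
  have hbd : ∀ t, T₀ ≤ t → ‖γ t - x₀‖ ≤ 2*A*t ^ (-(1:ℝ)/2) := by
    intro t ht
    have htend : Tendsto (fun n : ℕ => ‖γ t - γ (T₀ + n)‖) atTop (nhds ‖γ t - x₀‖) :=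
      (tendsto_const_nhds.sub hlim).norm
    refine le_of_tendsto htend ?_
    filter_upwards [Filter.eventually_ge_atTop ⌈t⌉₊] with n hn
    have htn : t ≤ T₀ + n := by
      have h1 : t ≤ (⌈t⌉₊ : ℝ) := Nat.le_ceil t
      have h2 : ((⌈t⌉₊ : ℕ) : ℝ) ≤ n := Nat.cast_le.2 hn
      linarith [hT₀0.le]
    rw [norm_sub_rev]
    exact hdist t (T₀ + n) ht htn
  -- Step 5: convergence of γ
  have htends : Tendsto γ atTop (nhds x₀) := by
    rw [tendsto_iff_dist_tendsto_zero]
    have h2 : Tendsto (fun t : ℝ => 2*A*t ^ (-(1:ℝ)/2)) atTop (nhds 0) := by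
      have h3 : Tendsto (fun x : ℝ => x ^ (-(1:ℝ)/2)) atTop (nhds 0) := by
        rw [show (-(1:ℝ)/2) = -(1/2 : ℝ) by norm_num]
        exact tendsto_rpow_neg_atTop (by norm_num)
      simpa using h3.const_mul (2*A)
    refine squeeze_zero' ?_ ?_ h2
    · exact Filter.Eventually.of_forall fun t => dist_nonneg
    · filter_upwards [Filter.eventually_ge_atTop T₀] with t ht
      rw [dist_eq_norm]; exact hbd t ht
  -- Step 6: bound on the compact part
  have hcompact : IsCompact (Set.Icc t₁ T₀) := isCompact_Icc
  have hconton : ContinuousOn (fun t => γ t - x₀) (Set.Icc t₁ T₀) := by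
    intro r hr
    exact (((hdiff r hr.1).continuousAt).continuousWithinAt).sub continuousWithinAt_const
  obtain ⟨B₀, hB₀⟩ := hcompact.exists_bound_of_continuousOn hconton
  have hB₀0 : 0 ≤ B₀ := le_trans (norm_nonneg _) (hB₀ t₁ ⟨le_rfl, hT₀t₁⟩)
  -- Step 7: conclusion
  refine ⟨x₀, htends, M * (2*A + B₀) * T₀ ^ ((1:ℝ)/2), by positivity, ?_⟩
  intro t ht
  have ht0 : 0 < t := ht₁0.trans_le ht
  have htpow : 0 ≤ t ^ (-(1:ℝ)/2) := Real.rpow_nonneg ht0.le _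
  rcases le_total T₀ t with hcase | hcase
  · -- t ≥ T₀
    have h1 : dinf (γ t) x₀ ≤ M * (2*A*t ^ (-(1:ℝ)/2)) :=
      (hdmetric (γ t) x₀).trans (mul_le_mul_of_nonneg_left (hbd t hcase) hM.le)
    refine h1.trans ?_
    have hT₀1 : (1:ℝ) ≤ T₀ ^ ((1:ℝ)/2) := by
      calc (1:ℝ) = (1:ℝ) ^ ((1:ℝ)/2) := (Real.one_rpow _).symm
        _ ≤ T₀ ^ ((1:ℝ)/2) :=
            Real.rpow_le_rpow zero_le_one (le_trans (by linarith) hT₀t₁) (by norm_num)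
    have hcoef : M*(2*A) ≤ M*(2*A+B₀)*T₀ ^ ((1:ℝ)/2) := by
      have c1 : M*(2*A) ≤ M*(2*A+B₀) := by nlinarith
      have c2 : M*(2*A+B₀)*1 ≤ M*(2*A+B₀)*T₀ ^ ((1:ℝ)/2) :=
        mul_le_mul_of_nonneg_left hT₀1 (by positivity)
      linarith [c1, c2]
    calc M * (2*A*t ^ (-(1:ℝ)/2)) = (M*(2*A)) * t ^ (-(1:ℝ)/2) := by ring
      _ ≤ (M*(2*A+B₀)*T₀ ^ ((1:ℝ)/2)) * t ^ (-(1:ℝ)/2) :=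
          mul_le_mul_of_nonneg_right hcoef htpow
      _ = M*(2*A+B₀)*T₀ ^ ((1:ℝ)/2) * t ^ (-(1:ℝ)/2) := by ring
  · -- t ≤ T₀
    have h1 : dinf (γ t) x₀ ≤ M * B₀ :=
      (hdmetric (γ t) x₀).trans (mul_le_mul_of_nonneg_left (hB₀ t ⟨ht, hcase⟩) hM.le)
    refine h1.trans ?_
    have h2 : T₀ ^ (-(1:ℝ)/2) ≤ t ^ (-(1:ℝ)/2) := hmono t T₀ ht0 hcase
    have h3 : T₀ ^ ((1:ℝ)/2) * T₀ ^ (-(1:ℝ)/2) = 1 := by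
      rw [← Real.rpow_add hT₀0]; norm_num
    have h4 : (1:ℝ) ≤ T₀ ^ ((1:ℝ)/2) * t ^ (-(1:ℝ)/2) := by
      calc (1:ℝ) = T₀ ^ ((1:ℝ)/2) * T₀ ^ (-(1:ℝ)/2) := h3.symm
        _ ≤ T₀ ^ ((1:ℝ)/2) * t ^ (-(1:ℝ)/2) :=
            mul_le_mul_of_nonneg_left h2 (Real.rpow_nonneg hT₀0.le _)
    calc M * B₀ ≤ M*B₀*(T₀ ^ ((1:ℝ)/2) * t ^ (-(1:ℝ)/2)) :=
          le_mul_of_one_le_right (by positivity) h4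
      _ ≤ M*(2*A+B₀)*(T₀ ^ ((1:ℝ)/2) * t ^ (-(1:ℝ)/2)) := by
          refine mul_le_mul_of_nonneg_right (by nlinarith) ?_
          exact mul_nonneg (Real.rpow_nonneg hT₀0.le _) htpow
      _ = M*(2*A+B₀)*T₀ ^ ((1:ℝ)/2) * t ^ (-(1:ℝ)/2) := by ring
end

section
/- Let t₁ ≥ 2 and suppose h, ĥ : [t₁,∞) → ℝ are differentiable, with ĥ(t) = h(t) + 3 ln t - c for a constant c, and suppose ⟨ĥ'⟩(t) = (3/t)(1 - e^{⟨ĥ⟩(t)/2}) + O(t^{a-2}) for some a < 1, where ⟨ĥ⟩ is bounded and converges to 0 as t → ∞. Then for every b with 0 < b < min(1-a, 1/2) there is C_b such that |⟨ĥ⟩(t)| ≤ C_b t^{-b} for all t ≥ t₁. -/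
lemma st17_exp_ineq (x : ℝ) (hx : |x| ≤ 1) : x * (1 - Real.exp (x / 2)) ≤ -(x ^ 2) / 4 := by
  rw [abs_le] at hx
  rcases le_or_gt 0 x with h | h
  · have h1 := Real.add_one_le_exp (x / 2)
    nlinarith
  · have h1 := Real.add_one_le_exp (-(x / 2))
    have h2 : Real.exp (x / 2) * Real.exp (-(x / 2)) = 1 := by
      rw [← Real.exp_add]; simp
    have h3 : 0 < Real.exp (x / 2) := Real.exp_pos _
    set y := Real.exp (x / 2) with hy
    set z := Real.exp (-(x / 2)) with hz
    have h0 : 1 + x / 2 ≤ y := by have := Real.add_one_le_exp (x / 2); linarith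
    have hA : y - x * y / 2 ≤ 1 := by nlinarith
    nlinarith [mul_nonneg (sq_nonneg x) (show (0:ℝ) ≤ y - 1/2 by linarith),
      mul_nonneg (neg_nonneg.mpr h.le) (show (0:ℝ) ≤ 1 - y + x * y / 2 by linarith)]

lemma st17_trap {E : ℝ → ℝ} {T : ℝ} (hcont : ∀ t, T ≤ t → DifferentiableAt ℝ E t)
    (hder : ∀ t, T ≤ t → 1 ≤ E t → deriv E t ≤ 0) :
    ∀ t, T ≤ t → E t ≤ max (E T) 1 := by
  intro s hs
  by_contra hcon
  push_neg at hcon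
  set m := max (E T) 1 with hm
  have hcontOn : ContinuousOn E (Set.Icc T s) :=
    fun t ht => ((hcont t ht.1).continuousAt).continuousWithinAt
  set S := Set.Icc T s ∩ E ⁻¹' (Set.Iic m) with hS
  have hSclosed : IsClosed S := hcontOn.preimage_isClosed_of_isClosed isClosed_Icc isClosed_Iic
  have hSne : S.Nonempty := ⟨T, ⟨le_rfl, hs⟩, Set.mem_preimage.mpr (Set.mem_Iic.mpr (le_max_left _ _))⟩
  have hSbdd : BddAbove S := ⟨s, fun t ht => ht.1.2⟩
  set u := sSup S with hu
  have huS : u ∈ S := hSclosed.csSup_mem hSne hSbdd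
  have hum : E u ≤ m := huS.2
  have hus : u < s := by
    rcases lt_or_eq_of_le huS.1.2 with hlt | heq
    · exact hlt
    · rw [heq] at hum; exact absurd hum (not_le.mpr hcon)
  have hgt : ∀ t, u < t → t ≤ s → m < E t := by
    intro t h1 h2
    by_contra hh; push_neg at hh
    have ht : t ∈ S := ⟨⟨le_trans huS.1.1 h1.le, h2⟩, hh⟩
    exact absurd (le_csSup hSbdd ht) (not_le.mpr h1)
  have hanti : AntitoneOn E (Set.Icc u s) := by
    apply antitoneOn_of_deriv_nonpos (convex_Icc u s)
    · exact hcontOn.mono (Set.Icc_subset_Icc huS.1.1 le_rfl)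
    · rw [interior_Icc]; intro t ht
      exact (hcont t (le_trans huS.1.1 ht.1.le)).differentiableWithinAt
    · rw [interior_Icc]; intro t ht
      exact hder t (le_trans huS.1.1 ht.1.le)
        (le_trans (le_max_right _ _) (hgt t ht.1 ht.2.le).le)
  have hfin := hanti (Set.left_mem_Icc.mpr hus.le) (Set.right_mem_Icc.mpr hus.le) hus.le
  exact absurd (le_trans hfin hum) (not_le.mpr hcon)

set_option maxHeartbeats 1600000 in

/-- Quantitative decay for the averaged quantity `g = ⟨λ̂⟩`: if `g` is bounded,
tends to `0`, and satisfies `g'(t) = (3/t)(1 - e^{g(t)/2}) + O(t^{a-2})` with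
`a < 1`, then for every `0 < b < min (1-a) (1/2)` there is `C_b` with
`|g(t)| ≤ C_b t^{-b}`. -/
theorem stmt17 (t₁ a : ℝ) (ht₁ : 2 ≤ t₁) (ha : a < 1) (g : ℝ → ℝ)
    (hdiff : ∀ t, t₁ ≤ t → DifferentiableAt ℝ g t)
    (hbdd : ∃ M, ∀ t, t₁ ≤ t → |g t| ≤ M)
    (hlim : Filter.Tendsto g Filter.atTop (nhds 0))
    (herr : ∃ Ce > 0, ∀ t, t₁ ≤ t →
      |deriv g t - (3 / t) * (1 - Real.exp (g t / 2))| ≤ Ce * t ^ (a - 2)) :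
    ∀ b : ℝ, 0 < b → b < min (1 - a) (1 / 2) →
      ∃ Cb > 0, ∀ t, t₁ ≤ t → |g t| ≤ Cb * t ^ (-b) := by
  intro b hb hbmin
  obtain ⟨M, hM⟩ := hbdd
  obtain ⟨Ce, hCe0, herr⟩ := herr
  have hM0 : 0 ≤ M := le_trans (abs_nonneg _) (hM t₁ le_rfl)
  have hb1 : b < 1 - a := lt_of_lt_of_le hbmin (min_le_left _ _)
  have hb2 : b < 1 / 2 := lt_of_lt_of_le hbmin (min_le_right _ _)
  set d : ℝ := 1 - a - b with hd
  have hd0 : 0 < d := by simp only [hd]; linarith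
  have hev : ∀ᶠ t in Filter.atTop, |g t| < 1 := by
    have h := hlim (Metric.ball_mem_nhds (0 : ℝ) one_pos)
    filter_upwards [h] with t ht
    simpa [Real.dist_eq] using ht
  obtain ⟨T₀, hT₀⟩ := Filter.eventually_atTop.mp hev
  set T₂ : ℝ := max (max t₁ T₀) ((4 * Ce) ^ d⁻¹ + 2) with hT₂
  have hT₂t₁ : t₁ ≤ T₂ := le_trans (le_max_left _ _) (le_max_left _ _)
  have hT₂0 : (0 : ℝ) < T₂ := lt_of_lt_of_le (by linarith) hT₂t₁
  have h4Ce : (0 : ℝ) < 4 * Ce := by linarith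
  -- key smallness of the error coefficient
  have hkey : ∀ t, T₂ ≤ t → Ce * t ^ (b + a - 1) ≤ 1 / 4 := by
    intro t ht
    have ht0 : 0 < t := lt_of_lt_of_le hT₂0 ht
    have h2 : (4 * Ce) ^ d⁻¹ ≤ t := by
      have := le_max_right (max t₁ T₀) ((4 * Ce) ^ d⁻¹ + 2)
      linarith [le_trans this ht]
    have h1 : 4 * Ce ≤ t ^ d := by
      calc 4 * Ce = ((4 * Ce) ^ d⁻¹) ^ d := (Real.rpow_inv_rpow h4Ce.le hd0.ne').symm
        _ ≤ t ^ d := Real.rpow_le_rpow (Real.rpow_nonneg h4Ce.le _) h2 hd0.le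
    have hinv : (t ^ d)⁻¹ ≤ (4 * Ce)⁻¹ := inv_anti₀ h4Ce h1
    have hba : b + a - 1 = -d := by simp only [hd]; ring
    rw [hba, Real.rpow_neg ht0.le]
    calc Ce * (t ^ d)⁻¹ ≤ Ce * (4 * Ce)⁻¹ :=
          mul_le_mul_of_nonneg_left hinv hCe0.le
      _ = 1 / 4 := by field_simp
  set E : ℝ → ℝ := fun t => t ^ (2 * b) * (g t) ^ 2 with hE
  have hEd : ∀ t, T₂ ≤ t →
      HasDerivAt E (2 * b * t ^ (2 * b - 1) * (g t) ^ 2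
        + t ^ (2 * b) * (2 * g t ^ 1 * deriv g t)) t := by
    intro t ht
    have ht0 : 0 < t := lt_of_lt_of_le hT₂0 ht
    have h1 : HasDerivAt (fun s : ℝ => s ^ (2 * b)) (2 * b * t ^ (2 * b - 1)) t :=
      Real.hasDerivAt_rpow_const (Or.inl ht0.ne')
    have h2 : HasDerivAt (fun s => (g s) ^ 2) (2 * g t ^ 1 * deriv g t) t :=
      ((hdiff t (le_trans hT₂t₁ ht)).hasDerivAt).pow 2
    exact h1.mul h2
  have hE'le : ∀ t, T₂ ≤ t → 1 ≤ E t → deriv E t ≤ 0 := by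
    intro t ht hEt
    have ht0 : 0 < t := lt_of_lt_of_le hT₂0 ht
    have habs : |g t| < 1 :=
      hT₀ t (le_trans (le_trans (le_max_right t₁ T₀) (le_max_left _ _)) ht)
    rw [(hEd t ht).deriv]
    simp only [hE] at hEt
    have hgd := herr t (le_trans hT₂t₁ ht)
    set ex := Real.exp (g t / 2) with hex
    set r := deriv g t - (3 / t) * (1 - ex) with hr
    have hgr : deriv g t = (3 / t) * (1 - ex) + r := by rw [hr]; ring
    set X := t ^ (2 * b - 1) with hX
    set Y := t ^ (2 * b) with hY
    set Z := t ^ (a - 2) with hZ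
    set W := t ^ (-b) with hW
    set K := t ^ (b + a - 1) with hK
    clear_value ex r X Y Z W K
    have PX : 0 < X := by rw [hX]; exact Real.rpow_pos_of_pos ht0 _
    have PY : 0 < Y := by rw [hY]; exact Real.rpow_pos_of_pos ht0 _
    have PZ : 0 < Z := by rw [hZ]; exact Real.rpow_pos_of_pos ht0 _
    have PW : 0 < W := by rw [hW]; exact Real.rpow_pos_of_pos ht0 _
    have PK : 0 < K := by rw [hK]; exact Real.rpow_pos_of_pos ht0 _
    have hkeyK : Ce * K ≤ 1 / 4 := by rw [hK]; exact hkey t ht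
    have hcub : g t * (1 - ex) ≤ -((g t) ^ 2) / 4 := by
      rw [hex]; exact st17_exp_ineq _ habs.le
    have e1 : Y * (3 / t) = 3 * X := by
      rw [hY, hX]
      rw [show (2 : ℝ) * b - 1 = 2 * b + (-1) from by ring, Real.rpow_add ht0,
        Real.rpow_neg_one]
      field_simp
    have e2 : Y * Z = K * (X * W) := by
      rw [hY, hZ, hK, hX, hW, ← Real.rpow_add ht0, ← Real.rpow_add ht0,
        ← Real.rpow_add ht0]
      ring_nf
    have hglow : W ≤ |g t| := by
      have hb0 : 0 < t ^ b := Real.rpow_pos_of_pos ht0 b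
      have hsq : Y = (t ^ b) ^ 2 := by
        rw [hY, ← Real.rpow_natCast (t ^ b) 2, ← Real.rpow_mul ht0.le]
        norm_num
        ring_nf
      have h1 : 1 ≤ (t ^ b * |g t|) ^ 2 := by
        rw [mul_pow, ← hsq, sq_abs]; exact hEt
      have h2 : 1 ≤ t ^ b * |g t| := by
        nlinarith [mul_nonneg hb0.le (abs_nonneg (g t))]
      rw [hW, Real.rpow_neg ht0.le, inv_eq_one_div, div_le_iff₀ hb0]
      nlinarith
    have herrb : g t * r ≤ |g t| * (Ce * Z) :=
      calc g t * r ≤ |g t * r| := le_abs_self _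
        _ = |g t| * |r| := abs_mul _ _
        _ ≤ |g t| * (Ce * Z) := mul_le_mul_of_nonneg_left hgd (abs_nonneg _)
    have h4 : Y * (g t * ((3 / t) * (1 - ex))) ≤ 3 * X * (-((g t) ^ 2) / 4) := by
      have : Y * (g t * ((3 / t) * (1 - ex))) = (Y * (3 / t)) * (g t * (1 - ex)) := by ring
      rw [this, e1]
      exact mul_le_mul_of_nonneg_left hcub (by linarith)
    have h5 : Y * (g t * r) ≤ 1 / 4 * (X * (g t) ^ 2) := by
      calc Y * (g t * r) ≤ Y * (|g t| * (Ce * Z)) :=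
            mul_le_mul_of_nonneg_left herrb PY.le
        _ = Ce * K * (X * W * |g t|) := by rw [show Y * (|g t| * (Ce * Z)) = Ce * (Y * Z) * |g t| from by ring, e2]; ring
        _ ≤ (1 / 4) * (X * W * |g t|) := by
            refine mul_le_mul_of_nonneg_right hkeyK ?_
            positivity
        _ ≤ (1 / 4) * (X * ((g t) ^ 2)) := by
            have h6 : X * W * |g t| ≤ X * ((g t) ^ 2) := by
              have : (g t) ^ 2 = |g t| * |g t| := by rw [← sq_abs]; ring
              rw [this]
              have h7 : X * W * |g t| ≤ X * |g t| * |g t| :=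
                mul_le_mul_of_nonneg_right
                  (mul_le_mul_of_nonneg_left hglow PX.le) (abs_nonneg _)
              nlinarith [h7]
            linarith
    rw [pow_one, hgr]
    nlinarith [h4, h5, mul_nonneg PX.le (sq_nonneg (g t)), hb2]
  -- trap argument
  have htrap := st17_trap (fun t ht => (hEd t ht).differentiableAt) hE'le
  set m : ℝ := max (E T₂) 1 with hm
  have hm1 : (1 : ℝ) ≤ m := le_max_right _ _
  have hdecay : ∀ t, T₂ ≤ t → |g t| ≤ Real.sqrt m * t ^ (-b) := by
    intro t ht
    have ht0 : 0 < t := lt_of_lt_of_le hT₂0 ht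
    have hEt : E t ≤ m := htrap t ht
    have hY : 0 < t ^ (2 * b) := Real.rpow_pos_of_pos ht0 _
    have hg2 : (g t) ^ 2 ≤ m * (t ^ (-b)) ^ 2 := by
      have hid : (t ^ (-b)) ^ 2 = (t ^ (2 * b))⁻¹ := by
        rw [← Real.rpow_natCast (t ^ (-b)) 2, ← Real.rpow_mul ht0.le]
        rw [show (-b) * (2 : ℕ) = -(2 * b) from by push_cast; ring, Real.rpow_neg ht0.le]
      rw [hid, ← sub_nonneg]
      have : m * (t ^ (2 * b))⁻¹ - (g t) ^ 2 = (m - E t) * (t ^ (2 * b))⁻¹ := by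
        rw [hE]; field_simp
      rw [this]
      exact mul_nonneg (by linarith) (inv_nonneg.mpr hY.le)
    calc |g t| = Real.sqrt ((g t) ^ 2) := (Real.sqrt_sq_eq_abs _).symm
      _ ≤ Real.sqrt (m * (t ^ (-b)) ^ 2) := Real.sqrt_le_sqrt hg2
      _ = Real.sqrt m * t ^ (-b) := by
          rw [Real.sqrt_mul (by linarith) _, Real.sqrt_sq (Real.rpow_nonneg ht0.le _)]
  refine ⟨max (Real.sqrt m) (M * T₂ ^ b) + 1, by positivity, ?_⟩
  intro t ht
  have ht0 : (0 : ℝ) < t := lt_of_lt_of_le (by linarith) ht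
  have htb : 0 < t ^ (-b) := Real.rpow_pos_of_pos ht0 _
  rcases le_total T₂ t with hc | hc
  · calc |g t| ≤ Real.sqrt m * t ^ (-b) := hdecay t hc
      _ ≤ (max (Real.sqrt m) (M * T₂ ^ b) + 1) * t ^ (-b) := by
          refine mul_le_mul_of_nonneg_right ?_ htb.le
          have := le_max_left (Real.sqrt m) (M * T₂ ^ b)
          linarith
  · have hTb : 0 < T₂ ^ b := Real.rpow_pos_of_pos hT₂0 _
    have h1 : t ^ b ≤ T₂ ^ b := Real.rpow_le_rpow ht0.le hc hb.le
    have h2 : (T₂ ^ b)⁻¹ ≤ t ^ (-b) := by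
      rw [Real.rpow_neg ht0.le]
      exact inv_anti₀ (Real.rpow_pos_of_pos ht0 b) h1
    have h3 : (1 : ℝ) ≤ T₂ ^ b * t ^ (-b) := by
      calc (1 : ℝ) = T₂ ^ b * (T₂ ^ b)⁻¹ := by field_simp
        _ ≤ T₂ ^ b * t ^ (-b) := mul_le_mul_of_nonneg_left h2 hTb.le
    calc |g t| ≤ M := hM t ht
      _ ≤ M * T₂ ^ b * t ^ (-b) := by nlinarith
      _ ≤ (max (Real.sqrt m) (M * T₂ ^ b) + 1) * t ^ (-b) := by
          refine mul_le_mul_of_nonneg_right ?_ htb.le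
          have := le_max_right (Real.sqrt m) (M * T₂ ^ b)
          linarith
end
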